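/- Let α, β > 0 and let X be a random variable with the Beta(α,β) distribution. Writing X* = log(X/(1−X)) and μ* = ψ(α) − ψ(β), the fourth central moment of X* satisfies E[(X* − μ*)⁴] = ψ'''(α) + ψ'''(β) + 3(ψ'(α) + ψ'(β))², where ψ' and ψ''' are the first and third derivatives of the digamma function ψ. -/

import Mathlib

open MeasureTheory Real

/-- Density of the Beta(a,b) distribution on (0,1). -/
noncomputable def betaDensity (a b : ℝ) : ℝ → ℝ :=
  Set.indicator (Set.Ioo 0 1)
    (fun x => (Real.Gamma (a + b) / (Real.Gamma a * Real.Gamma b)) * x ^ (a - 1) * (1 - x) ^ (b - 1))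

/-- The Beta(a,b) probability measure on ℝ. -/
noncomputable def betaMeasure (a b : ℝ) : Measure ℝ :=
  Measure.withDensity MeasureTheory.volume (fun x => ENNReal.ofReal (betaDensity a b x))

/-- The digamma function: derivative of log ∘ Γ. -/
noncomputable def digamma : ℝ → ℝ := deriv fun x => Real.log (Real.Gamma x)

/-- The trigamma function ψ': derivative of the digamma function. -/
noncomputable def trigamma : ℝ → ℝ := deriv digamma

/-- ψ''': the third derivative of the digamma function. -/
noncomputable def psi3 : ℝ → ℝ := iteratedDeriv 3 digamma

section Aux

open Set
open scoped ENNReal NNReal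

set_option linter.unusedSectionVars false

lemma contDiffAt_complex_Gamma {s : ℂ} (hs : 0 < s.re) : ContDiffAt ℂ ⊤ Complex.Gamma s := by
  have h : DifferentiableOn ℂ Complex.Gamma {z : ℂ | 0 < z.re} := by
    intro z hz
    refine (Complex.differentiableAt_Gamma z fun m => ?_).differentiableWithinAt
    intro h
    rw [h] at hz
    simp at hz
    have : (0:ℝ) ≤ m := Nat.cast_nonneg m
    linarith [hz]
  exact (h.analyticAt ((isOpen_lt continuous_const Complex.continuous_re).mem_nhds hs)).contDiffAt

lemma contDiffAt_Gamma_real {x : ℝ} (hx : 0 < x) : ContDiffAt ℝ ⊤ Real.Gamma x := by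
  have h1 : ContDiffAt ℝ ⊤ (fun y : ℝ => (Complex.Gamma (y : ℂ)).re) x := by
    have hg : ContDiffAt ℝ ⊤ Complex.Gamma (x : ℂ) :=
      (contDiffAt_complex_Gamma (by simpa using hx)).restrict_scalars ℝ
    exact Complex.reCLM.contDiff.contDiffAt.comp x
      (hg.comp x Complex.ofRealCLM.contDiff.contDiffAt)
  refine h1.congr_of_eventuallyEq ?_
  filter_upwards with y
  rw [Complex.Gamma_ofReal]; exact (Complex.ofReal_re _).symm

lemma contDiffOn_logGamma : ContDiffOn ℝ ⊤ (fun x => Real.log (Real.Gamma x)) (Ioi 0) := by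
  intro x hx
  exact ((Real.contDiffAt_log.mpr (Real.Gamma_pos_of_pos hx).ne').comp x
    (contDiffAt_Gamma_real hx)).contDiffWithinAt

lemma contDiffOn_digamma : ContDiffOn ℝ ⊤ digamma (Ioi 0) :=
  contDiffOn_logGamma.deriv_of_isOpen isOpen_Ioi le_top

lemma contDiffOn_trigamma : ContDiffOn ℝ ⊤ trigamma (Ioi 0) :=
  contDiffOn_digamma.deriv_of_isOpen isOpen_Ioi le_top

noncomputable def psi2 : ℝ → ℝ := deriv trigamma

lemma contDiffOn_psi2 : ContDiffOn ℝ ⊤ psi2 (Ioi 0) :=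
  contDiffOn_trigamma.deriv_of_isOpen isOpen_Ioi le_top

lemma psi3_eq : psi3 = deriv psi2 := by
  have h1 : iteratedDeriv 1 digamma = trigamma := by
    rw [iteratedDeriv_one]; rfl
  have h2 : iteratedDeriv 2 digamma = psi2 := by
    rw [show (2:ℕ) = 1 + 1 from rfl, iteratedDeriv_succ, h1]; rfl
  rw [psi3, show (3:ℕ) = 2 + 1 from rfl, iteratedDeriv_succ, h2]

lemma hasDerivAt_logGamma {x : ℝ} (hx : 0 < x) :
    HasDerivAt (fun y => Real.log (Real.Gamma y)) (digamma x) x := by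
  have := (contDiffOn_logGamma.differentiableOn (by simp)).differentiableAt
    (Ioi_mem_nhds hx)
  exact this.hasDerivAt

lemma hasDerivAt_digamma {x : ℝ} (hx : 0 < x) :
    HasDerivAt digamma (trigamma x) x :=
  ((contDiffOn_digamma.differentiableOn (by simp)).differentiableAt (Ioi_mem_nhds hx)).hasDerivAt

lemma hasDerivAt_trigamma {x : ℝ} (hx : 0 < x) :
    HasDerivAt trigamma (psi2 x) x :=
  ((contDiffOn_trigamma.differentiableOn (by simp)).differentiableAt (Ioi_mem_nhds hx)).hasDerivAt

lemma hasDerivAt_psi2 {x : ℝ} (hx : 0 < x) :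
    HasDerivAt psi2 (psi3 x) x := by
  rw [psi3_eq]
  exact ((contDiffOn_psi2.differentiableOn (by simp)).differentiableAt (Ioi_mem_nhds hx)).hasDerivAt

lemma betaMul_integrable {a b : ℝ} (ha : 0 < a) (hb : 0 < b) :
    IntegrableOn (fun x : ℝ => x ^ (a - 1) * (1 - x) ^ (b - 1)) (Ioo 0 1) := by
  have h := (Complex.betaIntegral_convergent (u := (a:ℂ)) (v := (b:ℂ))
      (by simpa using ha) (by simpa using hb))
  rw [intervalIntegrable_iff_integrableOn_Ioc_of_le zero_le_one] at h
  have h2 : IntegrableOn (fun x : ℝ => ‖(x:ℂ) ^ ((a:ℂ) - 1) * (1 - (x:ℂ)) ^ ((b:ℂ) - 1)‖)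
      (Ioc 0 1) := h.norm
  refine (h2.mono_set Ioo_subset_Ioc_self).congr_fun (fun x hx => ?_) measurableSet_Ioo
  obtain ⟨hx0, hx1⟩ := hx
  simp only [norm_mul]
  rw [Complex.norm_cpow_eq_rpow_re_of_pos hx0,
    (by push_cast; rfl : 1 - (x:ℂ) = ((1 - x : ℝ) : ℂ)),
    Complex.norm_cpow_eq_rpow_re_of_pos (by linarith)]
  norm_num

lemma measurable_blob (k : ℕ) (a b : ℝ) :
    Measurable (fun x : ℝ => |Real.log (x / (1 - x))| ^ k * (x ^ (a - 1) * (1 - x) ^ (b - 1))) := by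
  have m1 : Measurable fun x : ℝ => 1 - x := measurable_const.sub measurable_id
  exact ((Real.measurable_log.comp (measurable_id.div m1)).abs.pow_const k).mul
    ((measurable_id.pow_const (a-1)).mul (m1.pow_const (b-1)))

lemma log_le_rpow_div {y c : ℝ} (hy : 1 ≤ y) (hc : 0 < c) : Real.log y ≤ y ^ c / c := by
  have hy0 : 0 < y := lt_of_lt_of_le one_pos hy
  have h1 : Real.log y = Real.log (y ^ c) / c := by
    rw [Real.log_rpow hy0]; field_simp
  rw [h1]
  gcongr
  have := Real.log_le_sub_one_of_pos (Real.rpow_pos_of_pos hy0 c)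
  linarith

lemma integrable_L_pow_beta (k : ℕ) {a b : ℝ} (ha : 0 < a) (hb : 0 < b) :
    IntegrableOn (fun x : ℝ => |Real.log (x / (1 - x))| ^ k * (x ^ (a - 1) * (1 - x) ^ (b - 1)))
      (Ioo 0 1) := by
  rcases Nat.eq_zero_or_pos k with rfl | hk
  · simpa using betaMul_integrable ha hb
  set δ : ℝ := min a b / 2 with hδdef
  have hδ0 : 0 < δ := by
    rw [hδdef]; have := lt_min ha hb; linarith
  have hδa : δ ≤ a / 2 := by
    rw [hδdef]; have := min_le_left a b; linarith
  have hδb : δ ≤ b / 2 := by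
    rw [hδdef]; have := min_le_right a b; linarith
  set c : ℝ := δ / k with hcdef
  have hc0 : 0 < c := div_pos hδ0 (by exact_mod_cast hk)
  set C : ℝ := (1 / c) ^ k with hCdef
  have key : ∀ x ∈ Ioo (0:ℝ) 1,
      |Real.log (x / (1 - x))| ^ k * (x ^ (a - 1) * (1 - x) ^ (b - 1))
        ≤ C * (x ^ (a - δ - 1) * (1 - x) ^ (b - δ - 1)) := by
    intro x hx
    obtain ⟨hx0, hx1⟩ := hx
    have h1x : (0:ℝ) < 1 - x := by linarith
    have hz0 : (0:ℝ) < x * (1 - x) := mul_pos hx0 h1x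
    have hy1 : 1 ≤ 1 / (x * (1 - x)) := one_le_one_div hz0 (by nlinarith)
    have habs : |Real.log (x / (1 - x))| ≤ Real.log (1 / (x * (1 - x))) := by
      rw [Real.log_div hx0.ne' h1x.ne', Real.log_div one_ne_zero hz0.ne',
        Real.log_one, Real.log_mul hx0.ne' h1x.ne']
      have l1 : Real.log x < 0 := Real.log_neg hx0 hx1
      have l2 : Real.log (1 - x) < 0 := Real.log_neg h1x (by linarith)
      rw [abs_sub_le_iff]; constructor <;> linarith
    have hpow : |Real.log (x / (1 - x))| ^ k ≤ ((1 / (x * (1 - x))) ^ c / c) ^ k :=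
      pow_le_pow_left₀ (abs_nonneg _) (habs.trans (log_le_rpow_div hy1 hc0)) k
    have hck : c * (k:ℝ) = δ := by
      rw [hcdef]; field_simp
    have hrw : ((1 / (x * (1 - x))) ^ c / c) ^ k = C * (x ^ (-δ) * (1 - x) ^ (-δ)) := by
      have e1 : ((1 / (x * (1 - x))) ^ c) ^ k = (1 / (x * (1 - x))) ^ δ := by
        rw [← Real.rpow_natCast ((1 / (x * (1 - x))) ^ c) k,
          ← Real.rpow_mul (one_div_nonneg.mpr hz0.le), hck]
      have e2 : (1 / (x * (1 - x))) ^ δ = x ^ (-δ) * (1 - x) ^ (-δ) := by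
        rw [one_div, Real.inv_rpow hz0.le, ← Real.rpow_neg hz0.le,
          Real.mul_rpow hx0.le h1x.le]
      rw [div_pow, e1, e2, hCdef]
      have hcne : c ≠ 0 := hc0.ne'
      field_simp
      rw [← mul_pow, mul_one_div_cancel hcne, one_pow]
    have e3 : x ^ (a - δ - 1) = x ^ (-δ) * x ^ (a - 1) := by
      rw [← Real.rpow_add hx0]; ring_nf
    have e4 : (1 - x) ^ (b - δ - 1) = (1 - x) ^ (-δ) * (1 - x) ^ (b - 1) := by
      rw [← Real.rpow_add h1x]; ring_nf
    calc |Real.log (x / (1 - x))| ^ k * (x ^ (a - 1) * (1 - x) ^ (b - 1))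
        ≤ (C * (x ^ (-δ) * (1 - x) ^ (-δ))) * (x ^ (a - 1) * (1 - x) ^ (b - 1)) := by
          rw [← hrw]
          exact mul_le_mul_of_nonneg_right hpow
            (mul_nonneg (Real.rpow_nonneg hx0.le _) (Real.rpow_nonneg h1x.le _))
      _ = C * (x ^ (a - δ - 1) * (1 - x) ^ (b - δ - 1)) := by rw [e3, e4]; ring
  have hint : IntegrableOn (fun x : ℝ => C * (x ^ (a - δ - 1) * (1 - x) ^ (b - δ - 1))) (Ioo 0 1) :=
    ((betaMul_integrable (by linarith) (by linarith)).const_mul C)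
  refine MeasureTheory.Integrable.mono' hint ((measurable_blob k a b).aestronglyMeasurable) ?_
  filter_upwards [ae_restrict_mem measurableSet_Ioo] with x hx
  obtain ⟨h0, h1⟩ := hx
  rw [Real.norm_eq_abs, abs_of_nonneg (mul_nonneg (pow_nonneg (abs_nonneg _) _)
    (mul_nonneg (Real.rpow_nonneg h0.le _) (Real.rpow_nonneg (by linarith) _)))]
  exact key x ⟨h0, h1⟩

lemma realBetaIntegral {a b : ℝ} (ha : 0 < a) (hb : 0 < b) :
    ∫ x in Ioo (0:ℝ) 1, x ^ (a - 1) * (1 - x) ^ (b - 1)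
      = Real.Gamma a * Real.Gamma b / Real.Gamma (a + b) := by
  have key := Complex.Gamma_mul_Gamma_eq_betaIntegral (s := (a:ℂ)) (t := (b:ℂ))
    (by simpa using ha) (by simpa using hb)
  have hbeta : Complex.betaIntegral (a:ℂ) (b:ℂ)
      = ((∫ x in Ioo (0:ℝ) 1, x ^ (a - 1) * (1 - x) ^ (b - 1) : ℝ) : ℂ) := by
    rw [Complex.betaIntegral, intervalIntegral.integral_of_le zero_le_one]
    have step : ∫ x : ℝ in Ioc (0:ℝ) 1, (x:ℂ) ^ ((a:ℂ) - 1) * (1 - (x:ℂ)) ^ ((b:ℂ) - 1)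
        = ∫ x : ℝ in Ioc (0:ℝ) 1, ((x ^ (a-1) * (1-x) ^ (b-1) : ℝ) : ℂ) := by
      refine setIntegral_congr_ae measurableSet_Ioc ?_
      have h1 : ∀ᵐ x : ℝ, x ∈ Ioc (0:ℝ) 1 → x ≠ 1 := by
        have : ∀ᵐ x : ℝ, x ≠ 1 := by
          have := Real.volume_singleton (a := 1)
          rw [ae_iff]
          simpa [Set.setOf_eq_eq_singleton'] using this
        filter_upwards [this] with x hx _ using hx
      filter_upwards [h1] with x hx hmem
      have hx0 : 0 < x := hmem.1
      have hx1 : x < 1 := lt_of_le_of_ne hmem.2 (hx hmem)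
      have h1x : (0:ℝ) < 1 - x := by linarith
      rw [show ((a:ℂ) - 1) = ((a - 1 : ℝ) : ℂ) by push_cast; ring,
        show ((b:ℂ) - 1) = ((b - 1 : ℝ) : ℂ) by push_cast; ring,
        show (1 - (x:ℂ)) = ((1 - x : ℝ) : ℂ) by push_cast; ring,
        ← Complex.ofReal_cpow hx0.le, ← Complex.ofReal_cpow h1x.le]
      push_cast
      ring
    rw [step, ← integral_Ioc_eq_integral_Ioo]; exact integral_ofReal
  rw [hbeta, Complex.Gamma_ofReal, Complex.Gamma_ofReal, show ((a:ℂ) + b) = ((a+b : ℝ):ℂ) by push_cast; ring, Complex.Gamma_ofReal] at key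
  have hne : Real.Gamma (a + b) ≠ 0 := (Real.Gamma_pos_of_pos (by linarith)).ne'
  have key2 : Real.Gamma a * Real.Gamma b
      = Real.Gamma (a+b) * ∫ x in Ioo (0:ℝ) 1, x ^ (a - 1) * (1 - x) ^ (b - 1) := by
    exact_mod_cast key
  rw [key2]
  field_simp

lemma measurable_blob' (k : ℕ) (a b : ℝ) :
    Measurable (fun x : ℝ => (Real.log (x / (1 - x))) ^ k * (x ^ (a - 1) * (1 - x) ^ (b - 1))) := by
  have m1 : Measurable fun x : ℝ => 1 - x := measurable_const.sub measurable_id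
  exact ((Real.measurable_log.comp (measurable_id.div m1)).pow_const k).mul
    ((measurable_id.pow_const (a-1)).mul (m1.pow_const (b-1)))

lemma integrable_signed (k : ℕ) {a b : ℝ} (ha : 0 < a) (hb : 0 < b) :
    IntegrableOn (fun x : ℝ => (Real.log (x / (1 - x))) ^ k * (x ^ (a - 1) * (1 - x) ^ (b - 1)))
      (Ioo 0 1) := by
  refine (integrable_L_pow_beta k ha hb).mono'
    ((measurable_blob' k a b).aestronglyMeasurable) ?_
  filter_upwards [ae_restrict_mem measurableSet_Ioo] with x hx
  obtain ⟨h0, h1⟩ := hx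
  have h1x : (0:ℝ) < 1 - x := by linarith
  have hP : 0 ≤ x ^ (a-1) * (1-x) ^ (b-1) :=
    mul_nonneg (Real.rpow_nonneg h0.le _) (Real.rpow_nonneg h1x.le _)
  rw [Real.norm_eq_abs, abs_mul, abs_pow, abs_of_nonneg hP]

lemma hasDerivAt_J (α β : ℝ) (hα : 0 < α) (hβ : 0 < β) (k : ℕ) {t₀ : ℝ}
    (ht₀ : |t₀| < min α β / 2) :
    HasDerivAt (fun t => ∫ x in Ioo (0:ℝ) 1,
        (Real.log (x / (1 - x))) ^ k * (x ^ (α + t - 1) * (1 - x) ^ (β - t - 1)))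
      (∫ x in Ioo (0:ℝ) 1,
        (Real.log (x / (1 - x))) ^ (k+1) * (x ^ (α + t₀ - 1) * (1 - x) ^ (β - t₀ - 1))) t₀ := by
  set ε : ℝ := min α β / 2 with hεdef
  have hεα : ε ≤ α / 2 := by rw [hεdef]; have := min_le_left α β; linarith
  have hεβ : ε ≤ β / 2 := by rw [hεdef]; have := min_le_right α β; linarith
  have hε0 : 0 < ε := by rw [hεdef]; have := lt_min hα hβ; linarith
  have hr : 0 < ε - |t₀| := by linarith
  have habs : ∀ t ∈ Metric.ball t₀ (ε - |t₀|), |t| < ε := by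
    intro t ht
    rw [Metric.mem_ball, Real.dist_eq] at ht
    calc |t| ≤ |t - t₀| + |t₀| := by
          have := abs_sub_abs_le_abs_sub t t₀; linarith [abs_sub_le t t₀ 0]
      _ < ε := by linarith
  have key := hasDerivAt_integral_of_dominated_loc_of_deriv_le (μ := volume.restrict (Ioo 0 1))
    (F := fun t x => (Real.log (x / (1 - x))) ^ k * (x ^ (α + t - 1) * (1 - x) ^ (β - t - 1)))
    (F' := fun t x => (Real.log (x / (1 - x))) ^ (k+1) * (x ^ (α + t - 1) * (1 - x) ^ (β - t - 1)))
    (bound := fun x => |Real.log (x / (1 - x))| ^ (k+1) * (x ^ (α - ε - 1) * (1 - x) ^ (β - ε - 1)))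
    (x₀ := t₀) (Metric.ball_mem_nhds t₀ hr)
    (Filter.Eventually.of_forall fun t => (measurable_blob' k _ _).aestronglyMeasurable)
    ?_ ((measurable_blob' (k+1) _ _).aestronglyMeasurable) ?_ ?_ ?_
  · exact key.2
  · -- Integrable (F t₀)
    have h1 : 0 < α + t₀ := by
      have := abs_lt.mp ht₀; linarith
    have h2 : 0 < β - t₀ := by
      have := abs_lt.mp ht₀; linarith
    have := integrable_signed k h1 h2
    simpa [add_sub_assoc, sub_sub, IntegrableOn] using this.congr_fun (fun x _ => by ring_nf) measurableSet_Ioo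
  · -- bound
    filter_upwards [ae_restrict_mem measurableSet_Ioo] with x hx t ht
    obtain ⟨h0, h1⟩ := hx
    have h1x : (0:ℝ) < 1 - x := by linarith
    have htε := habs t ht
    have ht' := abs_lt.mp htε
    have e1 : x ^ (α + t - 1) ≤ x ^ (α - ε - 1) :=
      Real.rpow_le_rpow_of_exponent_ge h0 h1.le (by linarith)
    have e2 : (1 - x) ^ (β - t - 1) ≤ (1 - x) ^ (β - ε - 1) :=
      Real.rpow_le_rpow_of_exponent_ge h1x (by linarith) (by linarith)
    rw [Real.norm_eq_abs, abs_mul, abs_pow]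
    have hP : 0 ≤ x ^ (α + t - 1) * (1 - x) ^ (β - t - 1) :=
      mul_nonneg (Real.rpow_nonneg h0.le _) (Real.rpow_nonneg h1x.le _)
    rw [abs_of_nonneg hP]
    have := mul_le_mul e1 e2 (Real.rpow_nonneg h1x.le _) (Real.rpow_nonneg h0.le _)
    exact mul_le_mul_of_nonneg_left this (pow_nonneg (abs_nonneg _) _)
  · -- bound integrable
    exact integrable_L_pow_beta (k+1) (by linarith : (0:ℝ) < α - ε) (by linarith : (0:ℝ) < β - ε)
  · -- h_diff
    filter_upwards [ae_restrict_mem measurableSet_Ioo] with x hx t ht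
    obtain ⟨h0, h1⟩ := hx
    have h1x : (0:ℝ) < 1 - x := by linarith
    have d1 : HasDerivAt (fun t : ℝ => x ^ (α + t - 1)) (x ^ (α + t - 1) * Real.log x) t := by
      have dinner : HasDerivAt (fun t : ℝ => α + t - 1) 1 t := by
        simpa using ((hasDerivAt_id t).const_add α).sub_const 1
      have douter := (Real.hasStrictDerivAt_const_rpow h0 (α + t - 1)).hasDerivAt
      simpa [Function.comp_def] using HasDerivAt.comp t douter dinner
    have d2 : HasDerivAt (fun t : ℝ => (1 - x) ^ (β - t - 1))
        (-((1 - x) ^ (β - t - 1) * Real.log (1 - x))) t := by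
      have dinner : HasDerivAt (fun t : ℝ => β - t - 1) (-1) t := by
        simpa using ((hasDerivAt_id t).const_sub β).sub_const 1
      have douter := (Real.hasStrictDerivAt_const_rpow h1x (β - t - 1)).hasDerivAt
      have := HasDerivAt.comp t douter dinner
      simpa [Function.comp_def] using this.congr_deriv (by ring)
    have dprod := (d1.mul d2).const_mul ((Real.log (x / (1 - x))) ^ k)
    have hlog : Real.log (x / (1 - x)) = Real.log x - Real.log (1 - x) :=
      Real.log_div h0.ne' h1x.ne'
    refine dprod.congr_deriv ?_
    rw [pow_succ, hlog]
    ring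

noncomputable def auxE (α β : ℝ) (t : ℝ) : ℝ :=
  Real.exp (Real.log (Real.Gamma (α + t)) + Real.log (Real.Gamma (β - t))
    - Real.log (Real.Gamma (α + β)))
noncomputable def auxg1 (α β t : ℝ) : ℝ := digamma (α + t) - digamma (β - t)
noncomputable def auxg2 (α β t : ℝ) : ℝ := trigamma (α + t) + trigamma (β - t)
noncomputable def auxg3 (α β t : ℝ) : ℝ := psi2 (α + t) - psi2 (β - t)
noncomputable def auxg4 (α β t : ℝ) : ℝ := psi3 (α + t) + psi3 (β - t)

variable {α β : ℝ}

lemma hasDerivAt_auxg1 {t : ℝ} (ha : 0 < α + t) (hb : 0 < β - t) :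
    HasDerivAt (auxg1 α β) (auxg2 α β t) t := by
  have dA : HasDerivAt (fun t : ℝ => digamma (α + t)) (trigamma (α + t)) t := by
    simpa [Function.comp_def] using (hasDerivAt_digamma ha).comp t ((hasDerivAt_id t).const_add α)
  have dB : HasDerivAt (fun t : ℝ => digamma (β - t)) (-trigamma (β - t)) t := by
    simpa [Function.comp_def] using (hasDerivAt_digamma hb).comp t ((hasDerivAt_id t).const_sub β)
  unfold auxg1 auxg2; exact (dA.sub dB).congr_deriv (by ring)

lemma hasDerivAt_auxg2 {t : ℝ} (ha : 0 < α + t) (hb : 0 < β - t) :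
    HasDerivAt (auxg2 α β) (auxg3 α β t) t := by
  have dA : HasDerivAt (fun t : ℝ => trigamma (α + t)) (psi2 (α + t)) t := by
    simpa [Function.comp_def] using (hasDerivAt_trigamma ha).comp t ((hasDerivAt_id t).const_add α)
  have dB : HasDerivAt (fun t : ℝ => trigamma (β - t)) (-psi2 (β - t)) t := by
    simpa [Function.comp_def] using (hasDerivAt_trigamma hb).comp t ((hasDerivAt_id t).const_sub β)
  unfold auxg2 auxg3; exact (dA.add dB).congr_deriv (by ring)

lemma hasDerivAt_auxg3 {t : ℝ} (ha : 0 < α + t) (hb : 0 < β - t) :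
    HasDerivAt (auxg3 α β) (auxg4 α β t) t := by
  have dA : HasDerivAt (fun t : ℝ => psi2 (α + t)) (psi3 (α + t)) t := by
    simpa [Function.comp_def] using (hasDerivAt_psi2 ha).comp t ((hasDerivAt_id t).const_add α)
  have dB : HasDerivAt (fun t : ℝ => psi2 (β - t)) (-psi3 (β - t)) t := by
    simpa [Function.comp_def] using (hasDerivAt_psi2 hb).comp t ((hasDerivAt_id t).const_sub β)
  unfold auxg3 auxg4; exact (dA.sub dB).congr_deriv (by ring)

lemma hasDerivAt_auxE {t : ℝ} (ha : 0 < α + t) (hb : 0 < β - t) :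
    HasDerivAt (auxE α β) (auxE α β t * auxg1 α β t) t := by
  have dA : HasDerivAt (fun t : ℝ => Real.log (Real.Gamma (α + t))) (digamma (α + t)) t := by
    simpa [Function.comp_def] using (hasDerivAt_logGamma ha).comp t ((hasDerivAt_id t).const_add α)
  have dB : HasDerivAt (fun t : ℝ => Real.log (Real.Gamma (β - t))) (-digamma (β - t)) t := by
    simpa [Function.comp_def] using (hasDerivAt_logGamma hb).comp t ((hasDerivAt_id t).const_sub β)
  have dG : HasDerivAt (fun t : ℝ => Real.log (Real.Gamma (α + t)) + Real.log (Real.Gamma (β - t))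
      - Real.log (Real.Gamma (α + β))) (auxg1 α β t) t := by
    unfold auxg1; exact ((dA.add dB).sub_const (Real.log (Real.Gamma (α + β)))).congr_deriv (by ring)
  unfold auxE; exact dG.exp.congr_deriv (by ring)

noncomputable def auxJ (α β : ℝ) (k : ℕ) (t : ℝ) : ℝ :=
  ∫ x in Ioo (0:ℝ) 1, (Real.log (x / (1 - x))) ^ k * (x ^ (α + t - 1) * (1 - x) ^ (β - t - 1))

lemma hasDerivAt_auxJ (hα : 0 < α) (hβ : 0 < β) (k : ℕ) {t₀ : ℝ}
    (ht₀ : |t₀| < min α β / 2) :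
    HasDerivAt (auxJ α β k) (auxJ α β (k+1) t₀) t₀ :=
  hasDerivAt_J α β hα hβ k ht₀

lemma mem_ball_abs {t : ℝ} {ε : ℝ} : t ∈ Metric.ball (0:ℝ) ε ↔ |t| < ε := by
  rw [Metric.mem_ball, Real.dist_eq, sub_zero]

section vals
variable (hα : 0 < α) (hβ : 0 < β)
include hα hβ

lemma pos_of_ball {t : ℝ} (ht : |t| < min α β / 2) : 0 < α + t ∧ 0 < β - t := by
  have h := abs_lt.mp ht
  have h1 := min_le_left α β
  have h2 := min_le_right α β
  constructor <;> [linarith [h.1]; linarith [h.2]]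

lemma auxJ0_eq (t : ℝ) (ht : |t| < min α β / 2) : auxJ α β 0 t = auxE α β t := by
  obtain ⟨ha, hb⟩ := pos_of_ball hα hβ ht
  have := realBetaIntegral ha hb
  have e : auxJ α β 0 t = ∫ x in Ioo (0:ℝ) 1, x ^ (α + t - 1) * (1 - x) ^ (β - t - 1) := by
    rw [auxJ]
    exact setIntegral_congr_fun measurableSet_Ioo fun x _ => by rw [pow_zero, one_mul]
  rw [show α + t + (β - t) = α + β by ring] at this
  rw [e, this, auxE, Real.exp_sub, Real.exp_add,
    Real.exp_log (Real.Gamma_pos_of_pos ha), Real.exp_log (Real.Gamma_pos_of_pos hb),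
    Real.exp_log (Real.Gamma_pos_of_pos (by linarith))]

lemma auxJ_eventually (k : ℕ) {t : ℝ} (ht : |t| < min α β / 2)
    {f : ℝ → ℝ} (hf : ∀ s, |s| < min α β / 2 → auxJ α β k s = f s) :
    auxJ α β k =ᶠ[nhds t] f := by
  have hopen : IsOpen {s : ℝ | |s| < min α β / 2} := by
    have : {s : ℝ | |s| < min α β / 2} = Metric.ball (0:ℝ) (min α β / 2) := by
      ext s; rw [mem_ball_abs]; rfl
    rw [this]; exact Metric.isOpen_ball
  filter_upwards [hopen.mem_nhds ht] with s hs using hf s hs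

lemma auxJ1_eq (t : ℝ) (ht : |t| < min α β / 2) :
    auxJ α β 1 t = auxE α β t * auxg1 α β t := by
  obtain ⟨ha, hb⟩ := pos_of_ball hα hβ ht
  have hJd := hasDerivAt_auxJ hα hβ 0 ht
  have hEd := hasDerivAt_auxE ha hb
  have heq := auxJ_eventually hα hβ 0 ht (fun s hs => auxJ0_eq hα hβ s hs)
  exact (hJd.congr_of_eventuallyEq heq.symm).unique hEd

lemma auxJ2_eq (t : ℝ) (ht : |t| < min α β / 2) :
    auxJ α β 2 t = auxE α β t * (auxg2 α β t + auxg1 α β t ^ 2) := by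
  obtain ⟨ha, hb⟩ := pos_of_ball hα hβ ht
  have hJd := hasDerivAt_auxJ hα hβ 1 ht
  have hEd := ((hasDerivAt_auxE ha hb).mul (hasDerivAt_auxg1 ha hb)).congr_deriv
    (show auxE α β t * auxg1 α β t * auxg1 α β t + auxE α β t * auxg2 α β t
      = auxE α β t * (auxg2 α β t + auxg1 α β t ^ 2) by ring)
  have heq := auxJ_eventually hα hβ 1 ht (fun s hs => auxJ1_eq hα hβ s hs)
  exact (hJd.congr_of_eventuallyEq heq.symm).unique hEd

lemma auxJ3_eq (t : ℝ) (ht : |t| < min α β / 2) :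
    auxJ α β 3 t = auxE α β t
      * (auxg3 α β t + 3 * auxg2 α β t * auxg1 α β t + auxg1 α β t ^ 3) := by
  obtain ⟨ha, hb⟩ := pos_of_ball hα hβ ht
  have hJd := hasDerivAt_auxJ hα hβ 2 ht
  have hEd : HasDerivAt (fun s => auxE α β s * (auxg2 α β s + auxg1 α β s ^ 2))
      (auxE α β t * (auxg3 α β t + 3 * auxg2 α β t * auxg1 α β t + auxg1 α β t ^ 3)) t := by
    have h := (hasDerivAt_auxE ha hb).mul
      ((hasDerivAt_auxg2 ha hb).add ((hasDerivAt_auxg1 ha hb).pow 2))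
    refine h.congr_deriv ?_
    push_cast [Pi.add_apply, Pi.mul_apply, Pi.pow_apply]
    ring
  have heq := auxJ_eventually hα hβ 2 ht (fun s hs => auxJ2_eq hα hβ s hs)
  exact (hJd.congr_of_eventuallyEq heq.symm).unique hEd

lemma auxJ4_eq (t : ℝ) (ht : |t| < min α β / 2) :
    auxJ α β 4 t = auxE α β t
      * (auxg4 α β t + 4 * auxg3 α β t * auxg1 α β t + 3 * auxg2 α β t ^ 2
        + 6 * auxg2 α β t * auxg1 α β t ^ 2 + auxg1 α β t ^ 4) := by
  obtain ⟨ha, hb⟩ := pos_of_ball hα hβ ht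
  have hJd := hasDerivAt_auxJ hα hβ 3 ht
  have hEd : HasDerivAt
      (fun s => auxE α β s * (auxg3 α β s + 3 * auxg2 α β s * auxg1 α β s + auxg1 α β s ^ 3))
      (auxE α β t * (auxg4 α β t + 4 * auxg3 α β t * auxg1 α β t + 3 * auxg2 α β t ^ 2
        + 6 * auxg2 α β t * auxg1 α β t ^ 2 + auxg1 α β t ^ 4)) t := by
    have h := (hasDerivAt_auxE ha hb).mul
      (((hasDerivAt_auxg3 ha hb).add
        (((hasDerivAt_auxg2 ha hb).const_mul 3).mul (hasDerivAt_auxg1 ha hb))).add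
        ((hasDerivAt_auxg1 ha hb).pow 3))
    refine h.congr_deriv ?_
    push_cast [Pi.add_apply, Pi.mul_apply, Pi.pow_apply]
    ring
  have heq := auxJ_eventually hα hβ 3 ht (fun s hs => auxJ3_eq hα hβ s hs)
  exact (hJd.congr_of_eventuallyEq heq.symm).unique hEd

end vals

end Aux

section Main
open Set
open scoped ENNReal NNReal

theorem beta_logit_fourth_central_moment {Ω : Type*} [MeasurableSpace Ω] (P : Measure Ω)
    [IsProbabilityMeasure P] (X : Ω → ℝ) (α β : ℝ) (hα : 0 < α) (hβ : 0 < β)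
    (hX : P.map X = betaMeasure α β) :
    ∫ ω, (Real.log (X ω / (1 - X ω)) - (digamma α - digamma β)) ^ 4 ∂P
      = psi3 α + psi3 β + 3 * (trigamma α + trigamma β) ^ 2 := by
  have hε0 : 0 < min α β / 2 := by have := lt_min hα hβ; linarith
  have h0ball : |(0:ℝ)| < min α β / 2 := by simpa using hε0
  set μc : ℝ := digamma α - digamma β with hμc
  set g : ℝ → ℝ := fun x => (Real.log (x / (1 - x)) - μc) ^ 4 with hg
  have m1 : Measurable fun x : ℝ => 1 - x := measurable_const.sub measurable_id
  have mg : Measurable g :=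
    ((Real.measurable_log.comp (measurable_id.div m1)).sub_const μc).pow_const 4
  set C : ℝ := Real.Gamma (α + β) / (Real.Gamma α * Real.Gamma β) with hC
  have hΓα := Real.Gamma_pos_of_pos hα
  have hΓβ := Real.Gamma_pos_of_pos hβ
  have hΓαβ := Real.Gamma_pos_of_pos (by linarith : 0 < α + β)
  have hCpos : 0 < C := by rw [hC]; positivity
  have mdens : Measurable (betaDensity α β) :=
    (((measurable_const.mul (measurable_id.pow_const (α-1))).mul
      (m1.pow_const (β-1))).indicator measurableSet_Ioo)
  have hdens_nonneg : ∀ x, 0 ≤ betaDensity α β x := by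
    intro x
    rw [betaDensity]
    apply Set.indicator_nonneg
    intro y hy
    have h0 : (0:ℝ) < y := hy.1
    have h1 : (0:ℝ) < 1 - y := by have := hy.2; linarith
    have := Real.rpow_nonneg h0.le (α - 1)
    have := Real.rpow_nonneg h1.le (β - 1)
    positivity
  -- X is a.e. measurable
  have hXae : AEMeasurable X P := by
    by_contra h
    rw [Measure.map_of_not_aemeasurable h] at hX
    have h1 : betaMeasure α β (Ioo 0 1) = 0 := by rw [← hX]; simp
    rw [betaMeasure, withDensity_apply _ measurableSet_Ioo] at h1
    rw [lintegral_eq_zero_iff mdens.ennreal_ofReal] at h1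
    rw [Filter.EventuallyEq, ae_iff] at h1
    simp only [Pi.zero_apply] at h1
    have hsub : Ioo (0:ℝ) 1 ⊆ {x : ℝ | ¬ ENNReal.ofReal (betaDensity α β x) = 0} := by
      intro x hx
      have h0 : (0:ℝ) < x := hx.1
      have h1x : (0:ℝ) < 1 - x := by have := hx.2; linarith
      simp only [Set.mem_setOf_eq, ENNReal.ofReal_eq_zero, not_le]
      rw [betaDensity, Set.indicator_of_mem hx]
      have := Real.rpow_pos_of_pos h0 (α - 1)
      have := Real.rpow_pos_of_pos h1x (β - 1)
      positivity
    have hle := measure_mono_null hsub h1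
    rw [Measure.restrict_apply_self] at hle
    simp [Real.volume_Ioo] at hle
  -- reduce to an integral against the beta measure
  have step1 : ∫ ω, g (X ω) ∂P = ∫ y, g y ∂(betaMeasure α β) := by
    rw [← integral_map hXae mg.aestronglyMeasurable, hX]
  -- withDensity
  have step2 : ∫ y, g y ∂(betaMeasure α β) = ∫ y, betaDensity α β y * g y := by
    rw [betaMeasure]
    rw [show (fun x => ENNReal.ofReal (betaDensity α β x))
      = (fun x => ((betaDensity α β x).toNNReal : ℝ≥0∞)) from rfl]
    rw [integral_withDensity_eq_integral_smul mdens.real_toNNReal g]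
    congr 1
    funext x
    simp [NNReal.smul_def, Real.coe_toNNReal _ (hdens_nonneg x)]
  -- indicator
  have step3 : ∫ y, betaDensity α β y * g y
      = ∫ y in Ioo (0:ℝ) 1, C * (y ^ (α-1) * (1-y) ^ (β-1) * g y) := by
    rw [← integral_indicator measurableSet_Ioo]
    congr 1
    funext x
    rw [betaDensity]
    by_cases hx : x ∈ Ioo (0:ℝ) 1
    · rw [Set.indicator_of_mem hx, Set.indicator_of_mem hx]; ring
    · rw [Set.indicator_of_notMem hx, Set.indicator_of_notMem hx, zero_mul]
  -- expand the fourth power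
  set L : ℝ → ℝ := fun x => Real.log (x / (1 - x)) with hL
  have hIk : ∀ k : ℕ, IntegrableOn (fun x => L x ^ k * (x ^ (α-1) * (1-x) ^ (β-1))) (Ioo 0 1) :=
    fun k => integrable_signed k hα hβ
  have hJk0 : ∀ k : ℕ, (∫ x in Ioo (0:ℝ) 1, L x ^ k * (x ^ (α-1) * (1-x) ^ (β-1)))
      = auxJ α β k 0 := by
    intro k
    rw [auxJ]
    exact setIntegral_congr_fun measurableSet_Ioo fun x _ => by norm_num [hL]
  have expand : ∫ y in Ioo (0:ℝ) 1, y ^ (α-1) * (1-y) ^ (β-1) * g y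
      = auxJ α β 4 0 + (-4*μc) * auxJ α β 3 0 + (6*μc^2) * auxJ α β 2 0
        + (-4*μc^3) * auxJ α β 1 0 + μc^4 * auxJ α β 0 0 := by
    have pointwise : ∀ x ∈ Ioo (0:ℝ) 1, x ^ (α-1) * (1-x) ^ (β-1) * g x
        = L x ^ 4 * (x ^ (α-1) * (1-x) ^ (β-1))
          + ((-4*μc) * (L x ^ 3 * (x ^ (α-1) * (1-x) ^ (β-1)))
          + ((6*μc^2) * (L x ^ 2 * (x ^ (α-1) * (1-x) ^ (β-1)))
          + ((-4*μc^3) * (L x ^ 1 * (x ^ (α-1) * (1-x) ^ (β-1)))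
          + (μc^4 * (L x ^ 0 * (x ^ (α-1) * (1-x) ^ (β-1))))))) := by
      intro x _
      simp only [hg, hL]
      ring
    rw [setIntegral_congr_fun measurableSet_Ioo pointwise]
    set P : ℝ → ℝ := fun x => x ^ (α-1) * (1-x) ^ (β-1) with hP
    have e1 : ∫ x in Ioo (0:ℝ) 1, (L x ^ 4 * P x
          + ((-4*μc) * (L x ^ 3 * P x) + ((6*μc^2) * (L x ^ 2 * P x)
          + ((-4*μc^3) * (L x ^ 1 * P x) + (μc^4 * (L x ^ 0 * P x))))))
        = (∫ x in Ioo (0:ℝ) 1, L x ^ 4 * P x)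
          + ∫ x in Ioo (0:ℝ) 1, ((-4*μc) * (L x ^ 3 * P x) + ((6*μc^2) * (L x ^ 2 * P x)
          + ((-4*μc^3) * (L x ^ 1 * P x) + (μc^4 * (L x ^ 0 * P x))))) := by
      exact integral_add (hIk 4) (((hIk 3).const_mul (-4*μc)).add (((hIk 2).const_mul (6*μc^2)).add
        (((hIk 1).const_mul (-4*μc^3)).add ((hIk 0).const_mul (μc^4)))))
    have e2 : ∫ x in Ioo (0:ℝ) 1, ((-4*μc) * (L x ^ 3 * P x) + ((6*μc^2) * (L x ^ 2 * P x)
          + ((-4*μc^3) * (L x ^ 1 * P x) + (μc^4 * (L x ^ 0 * P x)))))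
        = (∫ x in Ioo (0:ℝ) 1, (-4*μc) * (L x ^ 3 * P x))
          + ∫ x in Ioo (0:ℝ) 1, ((6*μc^2) * (L x ^ 2 * P x)
          + ((-4*μc^3) * (L x ^ 1 * P x) + (μc^4 * (L x ^ 0 * P x)))) := by
      exact integral_add ((hIk 3).const_mul (-4*μc)) (((hIk 2).const_mul (6*μc^2)).add
        (((hIk 1).const_mul (-4*μc^3)).add ((hIk 0).const_mul (μc^4))))
    have e3 : ∫ x in Ioo (0:ℝ) 1, ((6*μc^2) * (L x ^ 2 * P x)
          + ((-4*μc^3) * (L x ^ 1 * P x) + (μc^4 * (L x ^ 0 * P x))))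
        = (∫ x in Ioo (0:ℝ) 1, (6*μc^2) * (L x ^ 2 * P x))
          + ∫ x in Ioo (0:ℝ) 1, ((-4*μc^3) * (L x ^ 1 * P x) + (μc^4 * (L x ^ 0 * P x))) := by
      exact integral_add ((hIk 2).const_mul (6*μc^2))
        (((hIk 1).const_mul (-4*μc^3)).add ((hIk 0).const_mul (μc^4)))
    have e4 : ∫ x in Ioo (0:ℝ) 1, ((-4*μc^3) * (L x ^ 1 * P x) + (μc^4 * (L x ^ 0 * P x)))
        = (∫ x in Ioo (0:ℝ) 1, (-4*μc^3) * (L x ^ 1 * P x))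
          + ∫ x in Ioo (0:ℝ) 1, μc^4 * (L x ^ 0 * P x) := by
      exact integral_add ((hIk 1).const_mul (-4*μc^3)) ((hIk 0).const_mul (μc^4))
    rw [e1, e2, e3, e4, integral_const_mul, integral_const_mul, integral_const_mul,
      integral_const_mul]
    rw [hJk0 4, hJk0 3, hJk0 2, hJk0 1, hJk0 0]
    ring
  -- plug in the values
  have hμeq : μc = auxg1 α β 0 := by simp [hμc, auxg1]
  have hCE : C * auxE α β 0 = 1 := by
    rw [hC, auxE]
    rw [add_zero, sub_zero, Real.exp_sub, Real.exp_add, Real.exp_log hΓα, Real.exp_log hΓβ,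
      Real.exp_log hΓαβ]
    field_simp
  have final : ∫ ω, g (X ω) ∂P = psi3 α + psi3 β + 3 * (trigamma α + trigamma β) ^ 2 :=
    calc ∫ ω, g (X ω) ∂P
      = ∫ y, g y ∂(betaMeasure α β) := step1
    _ = ∫ y in Ioo (0:ℝ) 1, C * (y ^ (α-1) * (1-y) ^ (β-1) * g y) := by rw [step2, step3]
    _ = C * ∫ y in Ioo (0:ℝ) 1, y ^ (α-1) * (1-y) ^ (β-1) * g y := integral_const_mul _ _
    _ = (C * auxE α β 0) * (auxg4 α β 0 + 3 * auxg2 α β 0 ^ 2) := by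
        rw [expand, auxJ0_eq hα hβ 0 h0ball, auxJ1_eq hα hβ 0 h0ball, auxJ2_eq hα hβ 0 h0ball,
          auxJ3_eq hα hβ 0 h0ball, auxJ4_eq hα hβ 0 h0ball, hμeq]
        ring
    _ = psi3 α + psi3 β + 3 * (trigamma α + trigamma β) ^ 2 := by
        rw [hCE, one_mul]
        simp [auxg4, auxg2]
  exact final

end Main
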